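/- The function x : ℝ → ℝ, x(t) = |t|^{3/2}, is continuously differentiable on ℝ with x'(t) = (3/2)·sgn(t)·|t|^{1/2} (and x'(0) = 0), is not twice differentiable at 0, and satisfies, for every t ≠ 0, t²·x''(t) + 4t·x'(t) + x(t) = (31/4)·|t|^{3/2}. -/

import Mathlib

noncomputable section

open Real Filter Set


lemma hd_main (t : ℝ) :
    HasDerivAt (fun s : ℝ => |s| ^ (3 / 2 : ℝ))
      (3 / 2 * Real.sign t * |t| ^ (1 / 2 : ℝ)) t := by
  rcases lt_trichotomy t 0 with ht | ht | ht
  · have hev : (fun s : ℝ => |s| ^ (3 / 2 : ℝ)) =ᶠ[nhds t] fun s => (-s) ^ (3 / 2 : ℝ) := by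
      filter_upwards [Iio_mem_nhds ht] with s hs
      rw [abs_of_neg hs]
    have hneg : HasDerivAt (fun s : ℝ => -s) (-1) t := (hasDerivAt_id t).neg
    have h1 := (Real.hasDerivAt_rpow_const (x := -t) (p := 3/2)
      (Or.inl (by linarith))).comp t hneg
    have h2 : HasDerivAt (fun s : ℝ => |s| ^ (3 / 2 : ℝ))
        (3 / 2 * (-t) ^ (3 / 2 - 1 : ℝ) * (-1)) t := h1.congr_of_eventuallyEq hev
    convert h2 using 1
    rw [Real.sign_of_neg ht, abs_of_neg ht]
    norm_num
  · subst ht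
    have h0 : |(0:ℝ)| ^ (3/2 : ℝ) = 0 := by
      simp [Real.zero_rpow]
    rw [hasDerivAt_iff_tendsto_slope]
    simp only [Real.sign_zero, mul_zero, zero_mul, mul_comm]
    have hb : ∀ s : ℝ, s ≠ 0 → |slope (fun s : ℝ => |s| ^ (3 / 2 : ℝ)) 0 s| ≤ |s| ^ (1/2 : ℝ) := by
      intro s hs
      rw [slope_def_field]
      simp only [h0, sub_zero]
      have hpos : (0:ℝ) < |s| := abs_pos.mpr hs
      have h3 : |s| ^ (3/2 : ℝ) = |s| ^ (1/2 : ℝ) * |s| := by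
        rw [show (3/2:ℝ) = 1/2 + 1 by norm_num, Real.rpow_add hpos, Real.rpow_one]
      rw [abs_div, abs_of_nonneg (Real.rpow_nonneg (abs_nonneg s) _), h3,
        mul_div_assoc, div_self (ne_of_gt hpos), mul_one]
    have hlim : Tendsto (fun s : ℝ => |s| ^ (1/2 : ℝ)) (nhds 0) (nhds 0) := by
      have : Continuous (fun s : ℝ => |s| ^ (1/2 : ℝ)) :=
        continuous_abs.rpow_const (fun _ => Or.inr (by norm_num))
      have h := this.tendsto 0
      simpa using h
    refine squeeze_zero_norm' ?_ (hlim.mono_left nhdsWithin_le_nhds)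
    filter_upwards [self_mem_nhdsWithin] with s hs
    exact hb s hs
  · have hev : (fun s : ℝ => |s| ^ (3 / 2 : ℝ)) =ᶠ[nhds t] fun s => s ^ (3 / 2 : ℝ) := by
      filter_upwards [Ioi_mem_nhds ht] with s hs
      rw [abs_of_pos hs]
    have h1 := Real.hasDerivAt_rpow_const (x := t) (p := 3/2) (Or.inl (ne_of_gt ht))
    have h2 : HasDerivAt (fun s : ℝ => |s| ^ (3 / 2 : ℝ))
        (3 / 2 * t ^ (3 / 2 - 1 : ℝ)) t := h1.congr_of_eventuallyEq hev
    convert h2 using 1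
    rw [Real.sign_of_pos ht, abs_of_pos ht]
    norm_num

lemma deriv_eq_g : deriv (fun s : ℝ => |s| ^ (3 / 2 : ℝ))
    = fun t : ℝ => 3 / 2 * Real.sign t * |t| ^ (1 / 2 : ℝ) :=
  funext fun t => (hd_main t).deriv

lemma hd2 (t : ℝ) (ht : t ≠ 0) :
    HasDerivAt (fun s : ℝ => 3 / 2 * Real.sign s * |s| ^ (1 / 2 : ℝ))
      (3 / 4 * |t| ^ (-(1/2) : ℝ)) t := by
  rcases ht.lt_or_gt with ht | ht
  · have hev : (fun s : ℝ => 3 / 2 * Real.sign s * |s| ^ (1 / 2 : ℝ))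
        =ᶠ[nhds t] fun s => -(3/2) * (-s) ^ (1 / 2 : ℝ) := by
      filter_upwards [Iio_mem_nhds ht] with s hs
      rw [Real.sign_of_neg hs, abs_of_neg hs]; ring
    have hneg : HasDerivAt (fun s : ℝ => -s) (-1) t := (hasDerivAt_id t).neg
    have h1 := ((Real.hasDerivAt_rpow_const (x := -t) (p := 1/2)
      (Or.inl (by linarith))).comp t hneg).const_mul (-(3/2) : ℝ)
    have h2 : HasDerivAt (fun s : ℝ => 3 / 2 * Real.sign s * |s| ^ (1 / 2 : ℝ))
        (-(3 / 2) * (1 / 2 * (-t) ^ (1 / 2 - 1 : ℝ) * -1)) t := h1.congr_of_eventuallyEq hev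
    convert h2 using 1
    rw [abs_of_neg ht]
    norm_num
    ring_nf
  · have hev : (fun s : ℝ => 3 / 2 * Real.sign s * |s| ^ (1 / 2 : ℝ))
        =ᶠ[nhds t] fun s => (3/2) * s ^ (1 / 2 : ℝ) := by
      filter_upwards [Ioi_mem_nhds ht] with s hs
      rw [Real.sign_of_pos hs, abs_of_pos hs]; ring
    have h1 := (Real.hasDerivAt_rpow_const (x := t) (p := 1/2)
      (Or.inl (ne_of_gt ht))).const_mul ((3/2) : ℝ)
    have h2 : HasDerivAt (fun s : ℝ => 3 / 2 * Real.sign s * |s| ^ (1 / 2 : ℝ))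
        (3 / 2 * (1 / 2 * t ^ (1 / 2 - 1 : ℝ))) t := h1.congr_of_eventuallyEq hev
    convert h2 using 1
    rw [abs_of_pos ht]
    norm_num
    ring_nf

lemma cont_g : Continuous (fun t : ℝ => 3 / 2 * Real.sign t * |t| ^ (1 / 2 : ℝ)) := by
  rw [continuous_iff_continuousAt]
  intro t
  rcases lt_trichotomy t 0 with ht | ht | ht
  · have hc : ContinuousAt (fun s : ℝ => -(3/2) * (-s) ^ (1 / 2 : ℝ)) t := by
      have : ContinuousAt (fun s : ℝ => (-s) ^ (1 / 2 : ℝ)) t :=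
        (Real.continuousAt_rpow_const (-t) (1/2) (Or.inl (by linarith))).comp
          (continuous_neg.continuousAt)
      exact this.const_mul _
    refine hc.congr ?_
    filter_upwards [Iio_mem_nhds ht] with s hs
    rw [Real.sign_of_neg hs, abs_of_neg hs]; ring
  · subst ht
    have h0 : (fun t : ℝ => 3 / 2 * Real.sign t * |t| ^ (1 / 2 : ℝ)) 0 = 0 := by
      simp
    unfold ContinuousAt
    rw [h0]
    have hbound : ∀ s : ℝ, ‖3 / 2 * Real.sign s * |s| ^ (1 / 2 : ℝ)‖ ≤ 3/2 * |s| ^ (1/2 : ℝ) := by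
      intro s
      rw [Real.norm_eq_abs, abs_mul, abs_mul]
      have hs1 : |Real.sign s| ≤ 1 := by
        rcases lt_trichotomy s 0 with h | h | h
        · simp [Real.sign_of_neg h]
        · simp [h]
        · simp [Real.sign_of_pos h]
      have : |(|s| ^ (1/2 : ℝ))| = |s| ^ (1/2 : ℝ) :=
        abs_of_nonneg (Real.rpow_nonneg (abs_nonneg s) _)
      rw [this]
      have hr : (0:ℝ) ≤ |s| ^ (1/2 : ℝ) := Real.rpow_nonneg (abs_nonneg s) _
      rw [abs_of_pos (show (0:ℝ) < 3/2 by norm_num)]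
      nlinarith [mul_le_mul_of_nonneg_right hs1 hr]
    have hlim : Tendsto (fun s : ℝ => 3/2 * |s| ^ (1/2 : ℝ)) (nhds 0) (nhds 0) := by
      have : Continuous (fun s : ℝ => 3/2 * |s| ^ (1/2 : ℝ)) :=
        continuous_const.mul (continuous_abs.rpow_const (fun _ => Or.inr (by norm_num)))
      have h := this.tendsto 0
      simpa [Real.zero_rpow] using h
    exact squeeze_zero_norm hbound hlim
  · have hc : ContinuousAt (fun s : ℝ => (3/2) * s ^ (1 / 2 : ℝ)) t :=
      (Real.continuousAt_rpow_const t (1/2) (Or.inl (ne_of_gt ht))).const_mul _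
    refine hc.congr ?_
    filter_upwards [Ioi_mem_nhds ht] with s hs
    rw [Real.sign_of_pos hs, abs_of_pos hs]; ring

lemma not_diff_g :
    ¬ DifferentiableAt ℝ (fun t : ℝ => 3 / 2 * Real.sign t * |t| ^ (1 / 2 : ℝ)) 0 := by
  intro h
  have h1 := h.hasDerivAt
  rw [hasDerivAt_iff_tendsto_slope] at h1
  have h2 : Tendsto (slope (fun t : ℝ => 3 / 2 * Real.sign t * |t| ^ (1 / 2 : ℝ)) 0)
      (nhdsWithin 0 (Set.Ioi 0)) (nhds _) :=
    h1.mono_left (nhdsWithin_mono 0 (fun x hx => ne_of_gt hx))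
  have hev : (fun s : ℝ => 3/2 * s ^ (-(1/2) : ℝ))
      =ᶠ[nhdsWithin 0 (Set.Ioi 0)]
      slope (fun t : ℝ => 3 / 2 * Real.sign t * |t| ^ (1 / 2 : ℝ)) 0 := by
    filter_upwards [self_mem_nhdsWithin] with s hs
    have hs' : (0:ℝ) < s := hs
    rw [slope_def_field]
    simp only [Real.sign_zero, mul_zero, zero_mul, sub_zero]
    rw [Real.sign_of_pos hs', abs_of_pos hs']
    rw [show (-(1/2) : ℝ) = 1/2 - 1 by norm_num, Real.rpow_sub hs', Real.rpow_one]
    ring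
  have h3 : Tendsto (fun s : ℝ => 3/2 * s ^ (-(1/2) : ℝ))
      (nhdsWithin 0 (Set.Ioi 0)) atTop := by
    have ha : Tendsto (fun s : ℝ => s ^ ((1/2) : ℝ))
        (nhdsWithin 0 (Set.Ioi 0)) (nhdsWithin 0 (Set.Ioi 0)) := by
      rw [tendsto_nhdsWithin_iff]
      constructor
      · have : Continuous (fun s : ℝ => |s| ^ (1/2 : ℝ)) :=
          continuous_abs.rpow_const (fun _ => Or.inr (by norm_num))
        have h : Tendsto (fun s : ℝ => |s| ^ (1/2 : ℝ)) (nhdsWithin 0 (Set.Ioi 0))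
            (nhds (|(0:ℝ)| ^ (1/2 : ℝ))) := (this.tendsto 0).mono_left nhdsWithin_le_nhds
        simp only [abs_zero] at h
        rw [Real.zero_rpow (by norm_num)] at h
        refine h.congr' ?_
        filter_upwards [self_mem_nhdsWithin] with s hs
        rw [abs_of_pos hs]
      · filter_upwards [self_mem_nhdsWithin] with s hs
        exact Real.rpow_pos_of_pos hs _
    have hb : Tendsto (fun s : ℝ => (s ^ ((1/2) : ℝ))⁻¹)
        (nhdsWithin 0 (Set.Ioi 0)) atTop := tendsto_inv_nhdsGT_zero.comp ha
    have hc := hb.const_mul_atTop (show (0:ℝ) < 3/2 by norm_num)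
    refine hc.congr' ?_
    filter_upwards [self_mem_nhdsWithin] with s hs
    rw [Real.rpow_neg (le_of_lt hs)]
  exact not_tendsto_nhds_of_tendsto_atTop (h3.congr' hev) _ h2


/-- The function `x t = |t|^{3/2}` is continuously differentiable on
`ℝ` with `x' t = (3/2)·sgn t·|t|^{1/2}` (so `x' 0 = 0`), is not twice differentiable at
`0`, and satisfies `t²·x'' t + 4t·x' t + x t = (31/4)·|t|^{3/2}` for every `t ≠ 0`. -/
theorem abs_rpow_three_halves_regularity :
    ContDiff ℝ 1 (fun t : ℝ => |t| ^ (3 / 2 : ℝ)) ∧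
    (∀ t : ℝ, deriv (fun s : ℝ => |s| ^ (3 / 2 : ℝ)) t
      = 3 / 2 * Real.sign t * |t| ^ (1 / 2 : ℝ)) ∧
    deriv (fun s : ℝ => |s| ^ (3 / 2 : ℝ)) 0 = 0 ∧
    ¬ DifferentiableAt ℝ (deriv (fun s : ℝ => |s| ^ (3 / 2 : ℝ))) 0 ∧
    (∀ t : ℝ, t ≠ 0 →
      t ^ 2 * deriv (deriv (fun s : ℝ => |s| ^ (3 / 2 : ℝ))) t
        + 4 * t * deriv (fun s : ℝ => |s| ^ (3 / 2 : ℝ)) t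
        + |t| ^ (3 / 2 : ℝ)
      = 31 / 4 * |t| ^ (3 / 2 : ℝ)) := by
  refine ⟨?_, fun t => (hd_main t).deriv, ?_, ?_, ?_⟩
  · rw [contDiff_one_iff_deriv]
    refine ⟨fun t => (hd_main t).differentiableAt, ?_⟩
    rw [deriv_eq_g]
    exact cont_g
  · rw [(hd_main 0).deriv]
    simp
  · rw [deriv_eq_g]
    exact not_diff_g
  · intro t ht
    rw [deriv_eq_g, (hd2 t ht).deriv]
    beta_reduce
    have hpos : (0:ℝ) < |t| := abs_pos.mpr ht
    have h2 : |t| ^ (2:ℝ) * |t| ^ (-(1/2):ℝ) = |t| ^ (3/2:ℝ) := by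
      rw [← Real.rpow_add hpos]; norm_num
    have h1 : |t| ^ (1:ℝ) * |t| ^ (1/2:ℝ) = |t| ^ (3/2:ℝ) := by
      rw [← Real.rpow_add hpos]; norm_num
    have ht2 : t ^ 2 = |t| ^ (2:ℝ) := by
      rw [← sq_abs, Real.rpow_two]
    have hts : t * Real.sign t = |t| := by
      rcases ht.lt_or_gt with h | h
      · rw [Real.sign_of_neg h, abs_of_neg h]; ring
      · rw [Real.sign_of_pos h, abs_of_pos h]; ring
    have eA : t ^ 2 * (3 / 4 * |t| ^ (-(1/2):ℝ)) = 3/4 * |t| ^ (3/2:ℝ) := by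
      calc t ^ 2 * (3 / 4 * |t| ^ (-(1/2):ℝ))
          = 3/4 * (|t| ^ (2:ℝ) * |t| ^ (-(1/2):ℝ)) := by rw [ht2]; ring
        _ = 3/4 * |t| ^ (3/2:ℝ) := by rw [h2]
    have eB : 4 * t * (3 / 2 * Real.sign t * |t| ^ (1/2:ℝ)) = 6 * |t| ^ (3/2:ℝ) := by
      calc 4 * t * (3 / 2 * Real.sign t * |t| ^ (1/2:ℝ))
          = 6 * ((t * Real.sign t) * |t| ^ (1/2:ℝ)) := by ring
        _ = 6 * (|t| ^ (1:ℝ) * |t| ^ (1/2:ℝ)) := by rw [hts, Real.rpow_one]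
        _ = 6 * |t| ^ (3/2:ℝ) := by rw [h1]
    linarith [eA, eB]
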